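/- In the Clifford algebra Cl(R^7) acting on the real 8-dimensional spin representation Σ, the element ω = e₁₂₃ − e₁₄₅ − e₁₆₇ − e₂₄₆ + e₂₅₇ − e₃₄₇ − e₃₅₆ (Clifford products of orthonormal basis vectors) acts as a symmetric endomorphism with eigenvalue −7 of multiplicity one and eigenvalue +1 of multiplicity seven. -/

import Mathlib

/-- The negative definite quadratic form on ℝ⁷ (convention eᵢ·eᵢ = −1). -/
noncomputable def Q : QuadraticForm ℝ (Fin 7 → ℝ) :=
  QuadraticMap.weightedSumSquares ℝ (fun _ : Fin 7 => (-1 : ℝ))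

/-- The Clifford generators e₁,…,e₇ (0-indexed: `e i` is e_{i+1}). -/
noncomputable def e (i : Fin 7) : CliffordAlgebra Q := CliffordAlgebra.ι Q (Pi.single i 1)

/-- ω = e₁₂₃ − e₁₄₅ − e₁₆₇ − e₂₄₆ + e₂₅₇ − e₃₄₇ − e₃₅₆ as a Clifford algebra element. -/
noncomputable def ω : CliffordAlgebra Q :=
  e 0 * e 1 * e 2 - e 0 * e 3 * e 4 - e 0 * e 5 * e 6 - e 1 * e 3 * e 5
    + e 1 * e 4 * e 6 - e 2 * e 3 * e 6 - e 2 * e 4 * e 5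

/-- The characteristic torsion element T = 2ω − 8e₁₂₃. -/
noncomputable def T : CliffordAlgebra Q := (2 : ℝ) • ω - (8 : ℝ) • (e 0 * e 1 * e 2)

/- ### Auxiliary construction: the spin representation via signed permutations -/

/-- Integer signs of the signed permutation matrices of the generators. -/
def sgz : Fin 7 → Fin 8 → ℤ :=
  ![![-1, 1, -1, 1, -1, 1, -1, 1], ![-1, 1, 1, -1, -1, 1, 1, -1],
    ![-1, -1, 1, 1, 1, 1, -1, -1], ![-1, 1, 1, -1, 1, -1, -1, 1],
    ![-1, -1, -1, -1, 1, 1, 1, 1], ![-1, 1, -1, 1, 1, -1, 1, -1],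
    ![-1, -1, 1, 1, -1, -1, 1, 1]]

/-- Real signs. -/
noncomputable def sg (i : Fin 7) (k : Fin 8) : ℝ := (sgz i k : ℝ)

/-- Underlying permutations of the generator matrices. -/
def pm : Fin 7 → Fin 8 → Fin 8 :=
  ![![1, 0, 3, 2, 5, 4, 7, 6], ![2, 3, 0, 1, 6, 7, 4, 5],
    ![3, 2, 1, 0, 7, 6, 5, 4], ![4, 5, 6, 7, 0, 1, 2, 3],
    ![5, 4, 7, 6, 1, 0, 3, 2], ![6, 7, 4, 5, 2, 3, 0, 1],
    ![7, 6, 5, 4, 3, 2, 1, 0]]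

lemma key1 : ∀ (i : Fin 7) (k : Fin 8), pm i (pm i k) = k := by decide
lemma key2 : ∀ (i j : Fin 7) (k : Fin 8), pm j (pm i k) = pm i (pm j k) := by decide
lemma key3 : ∀ (i j : Fin 7) (k : Fin 8), i ≠ j →
    sgz i k * sgz j (pm i k) + sgz j k * sgz i (pm j k) = 0 := by decide
lemma key4 : ∀ (i : Fin 7) (k : Fin 8), sgz i k * sgz i (pm i k) = -1 := by decide

/-- The action of the `i`-th generator on `ℝ⁸`. -/
noncomputable def A (i : Fin 7) : Module.End ℝ (EuclideanSpace ℝ (Fin 8)) where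
  toFun x := WithLp.toLp 2 (fun k => sg i k * x (pm i k))
  map_add' x y := PiLp.ext fun k =>
    show sg i k * (x (pm i k) + y (pm i k))
        = sg i k * x (pm i k) + sg i k * y (pm i k) by ring
  map_smul' c x := PiLp.ext fun k =>
    show sg i k * (c * x (pm i k)) = c * (sg i k * x (pm i k)) by ring

lemma A_apply (i : Fin 7) (x : EuclideanSpace ℝ (Fin 8)) (k : Fin 8) :
    A i x k = sg i k * x (pm i k) := rfl

/-- The Clifford anticommutation relations. -/
lemma hA (i j : Fin 7) :
    A i * A j + A j * A i = (if i = j then (-2 : ℝ) else 0) • 1 := by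
  apply LinearMap.ext; intro x
  ext k
  have expand : (A i * A j + A j * A i) x k
      = sg i k * (sg j (pm i k) * x (pm j (pm i k)))
        + sg j k * (sg i (pm j k) * x (pm i (pm j k))) := rfl
  rw [expand]
  by_cases h : i = j
  · subst h
    have h4 : sg i k * sg i (pm i k) = -1 := by
      unfold sg; exact_mod_cast congrArg (fun n : ℤ => (n : ℝ)) (key4 i k)
    have hval : ((if i = i then (-2 : ℝ) else 0) • (1 : Module.End ℝ (EuclideanSpace ℝ (Fin 8)))) x k
        = -2 * x k := by
      simp
    rw [hval, key1 i k]
    linear_combination 2 * x k * h4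
  · have h3 : sg i k * sg j (pm i k) + sg j k * sg i (pm j k) = 0 := by
      unfold sg; exact_mod_cast congrArg (fun n : ℤ => (n : ℝ)) (key3 i j k h)
    have hval : ((if i = j then (-2 : ℝ) else 0) • (1 : Module.End ℝ (EuclideanSpace ℝ (Fin 8)))) x k
        = 0 := by
      simp [h]
    rw [hval, show pm i (pm j k) = pm j (pm i k) from (key2 i j k).symm]
    linear_combination x (pm j (pm i k)) * h3

@[simp] lemma pm_0_0 : pm 0 0 = 1 := rfl
@[simp] lemma sg_0_0 : sg 0 0 = (-1 : ℝ) := by simp [sg, show sgz 0 0 = (-1 : ℤ) from rfl]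
@[simp] lemma pm_0_1 : pm 0 1 = 0 := rfl
@[simp] lemma sg_0_1 : sg 0 1 = (1 : ℝ) := by simp [sg, show sgz 0 1 = (1 : ℤ) from rfl]
@[simp] lemma pm_0_2 : pm 0 2 = 3 := rfl
@[simp] lemma sg_0_2 : sg 0 2 = (-1 : ℝ) := by simp [sg, show sgz 0 2 = (-1 : ℤ) from rfl]
@[simp] lemma pm_0_3 : pm 0 3 = 2 := rfl
@[simp] lemma sg_0_3 : sg 0 3 = (1 : ℝ) := by simp [sg, show sgz 0 3 = (1 : ℤ) from rfl]
@[simp] lemma pm_0_4 : pm 0 4 = 5 := rfl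
@[simp] lemma sg_0_4 : sg 0 4 = (-1 : ℝ) := by simp [sg, show sgz 0 4 = (-1 : ℤ) from rfl]
@[simp] lemma pm_0_5 : pm 0 5 = 4 := rfl
@[simp] lemma sg_0_5 : sg 0 5 = (1 : ℝ) := by simp [sg, show sgz 0 5 = (1 : ℤ) from rfl]
@[simp] lemma pm_0_6 : pm 0 6 = 7 := rfl
@[simp] lemma sg_0_6 : sg 0 6 = (-1 : ℝ) := by simp [sg, show sgz 0 6 = (-1 : ℤ) from rfl]
@[simp] lemma pm_0_7 : pm 0 7 = 6 := rfl
@[simp] lemma sg_0_7 : sg 0 7 = (1 : ℝ) := by simp [sg, show sgz 0 7 = (1 : ℤ) from rfl]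
@[simp] lemma pm_1_0 : pm 1 0 = 2 := rfl
@[simp] lemma sg_1_0 : sg 1 0 = (-1 : ℝ) := by simp [sg, show sgz 1 0 = (-1 : ℤ) from rfl]
@[simp] lemma pm_1_1 : pm 1 1 = 3 := rfl
@[simp] lemma sg_1_1 : sg 1 1 = (1 : ℝ) := by simp [sg, show sgz 1 1 = (1 : ℤ) from rfl]
@[simp] lemma pm_1_2 : pm 1 2 = 0 := rfl
@[simp] lemma sg_1_2 : sg 1 2 = (1 : ℝ) := by simp [sg, show sgz 1 2 = (1 : ℤ) from rfl]
@[simp] lemma pm_1_3 : pm 1 3 = 1 := rfl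
@[simp] lemma sg_1_3 : sg 1 3 = (-1 : ℝ) := by simp [sg, show sgz 1 3 = (-1 : ℤ) from rfl]
@[simp] lemma pm_1_4 : pm 1 4 = 6 := rfl
@[simp] lemma sg_1_4 : sg 1 4 = (-1 : ℝ) := by simp [sg, show sgz 1 4 = (-1 : ℤ) from rfl]
@[simp] lemma pm_1_5 : pm 1 5 = 7 := rfl
@[simp] lemma sg_1_5 : sg 1 5 = (1 : ℝ) := by simp [sg, show sgz 1 5 = (1 : ℤ) from rfl]
@[simp] lemma pm_1_6 : pm 1 6 = 4 := rfl
@[simp] lemma sg_1_6 : sg 1 6 = (1 : ℝ) := by simp [sg, show sgz 1 6 = (1 : ℤ) from rfl]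
@[simp] lemma pm_1_7 : pm 1 7 = 5 := rfl
@[simp] lemma sg_1_7 : sg 1 7 = (-1 : ℝ) := by simp [sg, show sgz 1 7 = (-1 : ℤ) from rfl]
@[simp] lemma pm_2_0 : pm 2 0 = 3 := rfl
@[simp] lemma sg_2_0 : sg 2 0 = (-1 : ℝ) := by simp [sg, show sgz 2 0 = (-1 : ℤ) from rfl]
@[simp] lemma pm_2_1 : pm 2 1 = 2 := rfl
@[simp] lemma sg_2_1 : sg 2 1 = (-1 : ℝ) := by simp [sg, show sgz 2 1 = (-1 : ℤ) from rfl]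
@[simp] lemma pm_2_2 : pm 2 2 = 1 := rfl
@[simp] lemma sg_2_2 : sg 2 2 = (1 : ℝ) := by simp [sg, show sgz 2 2 = (1 : ℤ) from rfl]
@[simp] lemma pm_2_3 : pm 2 3 = 0 := rfl
@[simp] lemma sg_2_3 : sg 2 3 = (1 : ℝ) := by simp [sg, show sgz 2 3 = (1 : ℤ) from rfl]
@[simp] lemma pm_2_4 : pm 2 4 = 7 := rfl
@[simp] lemma sg_2_4 : sg 2 4 = (1 : ℝ) := by simp [sg, show sgz 2 4 = (1 : ℤ) from rfl]
@[simp] lemma pm_2_5 : pm 2 5 = 6 := rfl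
@[simp] lemma sg_2_5 : sg 2 5 = (1 : ℝ) := by simp [sg, show sgz 2 5 = (1 : ℤ) from rfl]
@[simp] lemma pm_2_6 : pm 2 6 = 5 := rfl
@[simp] lemma sg_2_6 : sg 2 6 = (-1 : ℝ) := by simp [sg, show sgz 2 6 = (-1 : ℤ) from rfl]
@[simp] lemma pm_2_7 : pm 2 7 = 4 := rfl
@[simp] lemma sg_2_7 : sg 2 7 = (-1 : ℝ) := by simp [sg, show sgz 2 7 = (-1 : ℤ) from rfl]
@[simp] lemma pm_3_0 : pm 3 0 = 4 := rfl
@[simp] lemma sg_3_0 : sg 3 0 = (-1 : ℝ) := by simp [sg, show sgz 3 0 = (-1 : ℤ) from rfl]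
@[simp] lemma pm_3_1 : pm 3 1 = 5 := rfl
@[simp] lemma sg_3_1 : sg 3 1 = (1 : ℝ) := by simp [sg, show sgz 3 1 = (1 : ℤ) from rfl]
@[simp] lemma pm_3_2 : pm 3 2 = 6 := rfl
@[simp] lemma sg_3_2 : sg 3 2 = (1 : ℝ) := by simp [sg, show sgz 3 2 = (1 : ℤ) from rfl]
@[simp] lemma pm_3_3 : pm 3 3 = 7 := rfl
@[simp] lemma sg_3_3 : sg 3 3 = (-1 : ℝ) := by simp [sg, show sgz 3 3 = (-1 : ℤ) from rfl]
@[simp] lemma pm_3_4 : pm 3 4 = 0 := rfl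
@[simp] lemma sg_3_4 : sg 3 4 = (1 : ℝ) := by simp [sg, show sgz 3 4 = (1 : ℤ) from rfl]
@[simp] lemma pm_3_5 : pm 3 5 = 1 := rfl
@[simp] lemma sg_3_5 : sg 3 5 = (-1 : ℝ) := by simp [sg, show sgz 3 5 = (-1 : ℤ) from rfl]
@[simp] lemma pm_3_6 : pm 3 6 = 2 := rfl
@[simp] lemma sg_3_6 : sg 3 6 = (-1 : ℝ) := by simp [sg, show sgz 3 6 = (-1 : ℤ) from rfl]
@[simp] lemma pm_3_7 : pm 3 7 = 3 := rfl
@[simp] lemma sg_3_7 : sg 3 7 = (1 : ℝ) := by simp [sg, show sgz 3 7 = (1 : ℤ) from rfl]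
@[simp] lemma pm_4_0 : pm 4 0 = 5 := rfl
@[simp] lemma sg_4_0 : sg 4 0 = (-1 : ℝ) := by simp [sg, show sgz 4 0 = (-1 : ℤ) from rfl]
@[simp] lemma pm_4_1 : pm 4 1 = 4 := rfl
@[simp] lemma sg_4_1 : sg 4 1 = (-1 : ℝ) := by simp [sg, show sgz 4 1 = (-1 : ℤ) from rfl]
@[simp] lemma pm_4_2 : pm 4 2 = 7 := rfl
@[simp] lemma sg_4_2 : sg 4 2 = (-1 : ℝ) := by simp [sg, show sgz 4 2 = (-1 : ℤ) from rfl]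
@[simp] lemma pm_4_3 : pm 4 3 = 6 := rfl
@[simp] lemma sg_4_3 : sg 4 3 = (-1 : ℝ) := by simp [sg, show sgz 4 3 = (-1 : ℤ) from rfl]
@[simp] lemma pm_4_4 : pm 4 4 = 1 := rfl
@[simp] lemma sg_4_4 : sg 4 4 = (1 : ℝ) := by simp [sg, show sgz 4 4 = (1 : ℤ) from rfl]
@[simp] lemma pm_4_5 : pm 4 5 = 0 := rfl
@[simp] lemma sg_4_5 : sg 4 5 = (1 : ℝ) := by simp [sg, show sgz 4 5 = (1 : ℤ) from rfl]
@[simp] lemma pm_4_6 : pm 4 6 = 3 := rfl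
@[simp] lemma sg_4_6 : sg 4 6 = (1 : ℝ) := by simp [sg, show sgz 4 6 = (1 : ℤ) from rfl]
@[simp] lemma pm_4_7 : pm 4 7 = 2 := rfl
@[simp] lemma sg_4_7 : sg 4 7 = (1 : ℝ) := by simp [sg, show sgz 4 7 = (1 : ℤ) from rfl]
@[simp] lemma pm_5_0 : pm 5 0 = 6 := rfl
@[simp] lemma sg_5_0 : sg 5 0 = (-1 : ℝ) := by simp [sg, show sgz 5 0 = (-1 : ℤ) from rfl]
@[simp] lemma pm_5_1 : pm 5 1 = 7 := rfl
@[simp] lemma sg_5_1 : sg 5 1 = (1 : ℝ) := by simp [sg, show sgz 5 1 = (1 : ℤ) from rfl]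
@[simp] lemma pm_5_2 : pm 5 2 = 4 := rfl
@[simp] lemma sg_5_2 : sg 5 2 = (-1 : ℝ) := by simp [sg, show sgz 5 2 = (-1 : ℤ) from rfl]
@[simp] lemma pm_5_3 : pm 5 3 = 5 := rfl
@[simp] lemma sg_5_3 : sg 5 3 = (1 : ℝ) := by simp [sg, show sgz 5 3 = (1 : ℤ) from rfl]
@[simp] lemma pm_5_4 : pm 5 4 = 2 := rfl
@[simp] lemma sg_5_4 : sg 5 4 = (1 : ℝ) := by simp [sg, show sgz 5 4 = (1 : ℤ) from rfl]
@[simp] lemma pm_5_5 : pm 5 5 = 3 := rfl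
@[simp] lemma sg_5_5 : sg 5 5 = (-1 : ℝ) := by simp [sg, show sgz 5 5 = (-1 : ℤ) from rfl]
@[simp] lemma pm_5_6 : pm 5 6 = 0 := rfl
@[simp] lemma sg_5_6 : sg 5 6 = (1 : ℝ) := by simp [sg, show sgz 5 6 = (1 : ℤ) from rfl]
@[simp] lemma pm_5_7 : pm 5 7 = 1 := rfl
@[simp] lemma sg_5_7 : sg 5 7 = (-1 : ℝ) := by simp [sg, show sgz 5 7 = (-1 : ℤ) from rfl]
@[simp] lemma pm_6_0 : pm 6 0 = 7 := rfl
@[simp] lemma sg_6_0 : sg 6 0 = (-1 : ℝ) := by simp [sg, show sgz 6 0 = (-1 : ℤ) from rfl]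
@[simp] lemma pm_6_1 : pm 6 1 = 6 := rfl
@[simp] lemma sg_6_1 : sg 6 1 = (-1 : ℝ) := by simp [sg, show sgz 6 1 = (-1 : ℤ) from rfl]
@[simp] lemma pm_6_2 : pm 6 2 = 5 := rfl
@[simp] lemma sg_6_2 : sg 6 2 = (1 : ℝ) := by simp [sg, show sgz 6 2 = (1 : ℤ) from rfl]
@[simp] lemma pm_6_3 : pm 6 3 = 4 := rfl
@[simp] lemma sg_6_3 : sg 6 3 = (1 : ℝ) := by simp [sg, show sgz 6 3 = (1 : ℤ) from rfl]
@[simp] lemma pm_6_4 : pm 6 4 = 3 := rfl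
@[simp] lemma sg_6_4 : sg 6 4 = (-1 : ℝ) := by simp [sg, show sgz 6 4 = (-1 : ℤ) from rfl]
@[simp] lemma pm_6_5 : pm 6 5 = 2 := rfl
@[simp] lemma sg_6_5 : sg 6 5 = (-1 : ℝ) := by simp [sg, show sgz 6 5 = (-1 : ℤ) from rfl]
@[simp] lemma pm_6_6 : pm 6 6 = 1 := rfl
@[simp] lemma sg_6_6 : sg 6 6 = (1 : ℝ) := by simp [sg, show sgz 6 6 = (1 : ℤ) from rfl]
@[simp] lemma pm_6_7 : pm 6 7 = 0 := rfl
@[simp] lemma sg_6_7 : sg 6 7 = (1 : ℝ) := by simp [sg, show sgz 6 7 = (1 : ℤ) from rfl]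

/-- Diagonal entries. -/
noncomputable def dvec : Fin 8 → ℝ := ![1,1,1,-7,1,1,1,1]
@[simp] lemma dvec_0 : dvec 0 = (1 : ℝ) := rfl
@[simp] lemma dvec_1 : dvec 1 = (1 : ℝ) := rfl
@[simp] lemma dvec_2 : dvec 2 = (1 : ℝ) := rfl
@[simp] lemma dvec_3 : dvec 3 = (-7 : ℝ) := rfl
@[simp] lemma dvec_4 : dvec 4 = (1 : ℝ) := rfl
@[simp] lemma dvec_5 : dvec 5 = (1 : ℝ) := rfl
@[simp] lemma dvec_6 : dvec 6 = (1 : ℝ) := rfl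
@[simp] lemma dvec_7 : dvec 7 = (1 : ℝ) := rfl

/-- The diagonal endomorphism `diag(1,1,1,−7,1,1,1,1)`. -/
noncomputable def D : Module.End ℝ (EuclideanSpace ℝ (Fin 8)) where
  toFun x := WithLp.toLp 2 (fun k => dvec k * x k)
  map_add' x y := PiLp.ext fun k =>
    show _ * (x k + y k) = _ * x k + _ * y k by ring
  map_smul' c x := PiLp.ext fun k =>
    show dvec k * (c * x k)
        = c * (dvec k * x k) by ring

lemma D_apply (x : EuclideanSpace ℝ (Fin 8)) (k : Fin 8) :
    D x k = dvec k * x k := rfl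


/-- Projection onto coordinate 3. -/
noncomputable def proj3 : EuclideanSpace ℝ (Fin 8) →ₗ[ℝ] ℝ where
  toFun x := x 3
  map_add' x y := rfl
  map_smul' c x := rfl

/-- The linear map underlying the Clifford lift. -/
noncomputable def f : (Fin 7 → ℝ) →ₗ[ℝ] Module.End ℝ (EuclideanSpace ℝ (Fin 8)) where
  toFun v := ∑ i, v i • A i
  map_add' v w := by simp [add_smul, Finset.sum_add_distrib]
  map_smul' c v := by simp [Finset.smul_sum, smul_smul]

lemma f_apply (v : Fin 7 → ℝ) : f v = ∑ i, v i • A i := rfl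

lemma hf (v : Fin 7 → ℝ) :
    f v * f v = algebraMap ℝ (Module.End ℝ (EuclideanSpace ℝ (Fin 8))) (Q v) := by
  have hexp : f v * f v = ∑ i, ∑ j, (v i * v j) • (A i * A j) := by
    rw [f_apply, Finset.sum_mul]
    refine Finset.sum_congr rfl fun i _ => ?_
    rw [Finset.mul_sum]
    refine Finset.sum_congr rfl fun j _ => ?_
    rw [smul_mul_assoc, mul_smul_comm, smul_smul]
  have swap : (∑ i, ∑ j, (v i * v j) • (A i * A j))
      = ∑ i, ∑ j, (v i * v j) • (A j * A i) := by
    rw [Finset.sum_comm]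
    exact Finset.sum_congr rfl fun i _ => Finset.sum_congr rfl fun j _ => by
      rw [mul_comm (v j) (v i)]
  have hsum : f v * f v + f v * f v
      = ∑ i, ∑ j, (v i * v j) • (A i * A j + A j * A i) := by
    nth_rewrite 1 [hexp]
    nth_rewrite 1 [hexp]
    nth_rewrite 2 [swap]
    rw [← Finset.sum_add_distrib]
    refine Finset.sum_congr rfl fun i _ => ?_
    rw [← Finset.sum_add_distrib]
    exact Finset.sum_congr rfl fun j _ => (smul_add _ _ _).symm
  simp only [hA] at hsum
  have hred : f v * f v + f v * f v
      = ∑ i, (v i * v i) • ((-2 : ℝ) • (1 : Module.End ℝ (EuclideanSpace ℝ (Fin 8)))) := by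
    rw [hsum]
    refine Finset.sum_congr rfl fun i _ => ?_
    rw [Finset.sum_eq_single i]
    · simp
    · intro j _ hji
      simp [Ne.symm hji]
    · simp
  have hQv : Q v = -∑ i, v i * v i := by
    simp [Q, QuadraticMap.weightedSumSquares_apply, smul_eq_mul, neg_one_mul,
      Finset.sum_neg_distrib]
  have key : (2 : ℝ) • (f v * f v)
      = (2 : ℝ) • ((Q v) • (1 : Module.End ℝ (EuclideanSpace ℝ (Fin 8)))) := by
    rw [two_smul, two_smul, hred, hQv, ← Finset.sum_smul, smul_smul, ← add_smul]
    congr 1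
    ring
  have hfin := smul_right_injective (Module.End ℝ (EuclideanSpace ℝ (Fin 8)))
    (two_ne_zero (α := ℝ)) key
  rw [Algebra.algebraMap_eq_smul_one]
  exact hfin

/-- The spin representation. -/
noncomputable def ρ : CliffordAlgebra Q →ₐ[ℝ] Module.End ℝ (EuclideanSpace ℝ (Fin 8)) :=
  CliffordAlgebra.lift Q ⟨f, hf⟩

lemma ρ_ι (v : Fin 7 → ℝ) : ρ (CliffordAlgebra.ι Q v) = f v :=
  CliffordAlgebra.lift_ι_apply _ _ _

lemma ρ_e (i : Fin 7) : ρ (e i) = A i := by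
  rw [e, ρ_ι, f_apply]
  rw [Finset.sum_eq_single i]
  · simp
  · intro j _ hji
    simp [Pi.single_apply, hji]
  · simp

/-- Skew-symmetry of the generators. -/
lemma skewA (i : Fin 7) (x y : EuclideanSpace ℝ (Fin 8)) :
    (inner ℝ (A i x) y : ℝ) = -(inner ℝ x (A i y) : ℝ) := by
  simp only [PiLp.inner_apply, RCLike.inner_apply, conj_trivial, A_apply]
  fin_cases i <;> simp [Fin.sum_univ_eight] <;> ring

lemma ρ_omega : ρ ω = D := by
  have h : ρ ω = A 0 * A 1 * A 2 - A 0 * A 3 * A 4 - A 0 * A 5 * A 6 - A 1 * A 3 * A 5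
      + A 1 * A 4 * A 6 - A 2 * A 3 * A 6 - A 2 * A 4 * A 5 := by
    simp only [ω, map_sub, map_add, map_mul, ρ_e]
  rw [h]
  apply LinearMap.ext; intro x
  ext k
  simp only [LinearMap.sub_apply, LinearMap.add_apply, Module.End.mul_apply, A_apply, D_apply]
  fin_cases k <;> simp [A_apply] <;> ring

theorem stmt7 :
    ∃ ρ : CliffordAlgebra Q →ₐ[ℝ] Module.End ℝ (EuclideanSpace ℝ (Fin 8)),
      (∀ v : Fin 7 → ℝ, ∀ x y : EuclideanSpace ℝ (Fin 8),
        inner ℝ (ρ (CliffordAlgebra.ι Q v) x) y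
          = -(inner ℝ x (ρ (CliffordAlgebra.ι Q v) y) : ℝ))
      ∧ (ρ ω).IsSymmetric
      ∧ Module.finrank ℝ (Module.End.eigenspace (ρ ω) (-7)) = 1
      ∧ Module.finrank ℝ (Module.End.eigenspace (ρ ω) 1) = 7 := by
  refine ⟨ρ, ?_, ?_, ?_, ?_⟩
  · -- skew symmetry
    intro v x y
    rw [ρ_ι, f_apply]
    simp only [LinearMap.sum_apply, LinearMap.smul_apply, sum_inner, inner_sum,
      real_inner_smul_left, real_inner_smul_right]
    rw [← Finset.sum_neg_distrib]
    refine Finset.sum_congr rfl fun i _ => ?_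
    rw [skewA]
    ring
  · -- symmetric
    rw [ρ_omega]
    intro x y
    simp only [PiLp.inner_apply, RCLike.inner_apply, conj_trivial, D_apply]
    simp [Fin.sum_univ_eight]
    ring
  · -- eigenvalue -7
    rw [ρ_omega]
    have hspan : Module.End.eigenspace D (-7)
        = Submodule.span ℝ {(EuclideanSpace.single 3 1 : EuclideanSpace ℝ (Fin 8))} := by
      ext x
      rw [Module.End.mem_eigenspace_iff, Submodule.mem_span_singleton]
      constructor
      · intro hx
        have hk : ∀ k : Fin 8, D x k = -7 * x k := fun k => by
          rw [hx]; rfl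
        simp only [D_apply] at hk
        refine ⟨x 3, ?_⟩
        ext j
        have h0 := hk 0; have h1 := hk 1; have h2 := hk 2; have h4 := hk 4
        have h5 := hk 5; have h6 := hk 6; have h7 := hk 7
        simp only [dvec_0, dvec_1, dvec_2, dvec_4, dvec_5, dvec_6, dvec_7, one_mul]
          at h0 h1 h2 h4 h5 h6 h7
        fin_cases j <;>
          simp [EuclideanSpace.single_apply] <;> linarith
      · rintro ⟨c, rfl⟩
        ext k
        show D _ k = _
        rw [D_apply]
        show _ * (c * _) = -7 * (c * _)
        fin_cases k <;> simp [EuclideanSpace.single_apply] <;> ring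
    rw [hspan]
    refine finrank_span_singleton ?_
    intro hz
    have : (EuclideanSpace.single (3 : Fin 8) (1 : ℝ)) 3 = 0 := by rw [hz]; rfl
    simp [EuclideanSpace.single_apply] at this
  · -- eigenvalue 1
    rw [ρ_omega]
    have hker : Module.End.eigenspace D 1
        = LinearMap.ker (proj3) := by
      ext x
      rw [Module.End.mem_eigenspace_iff, LinearMap.mem_ker]
      constructor
      · intro hx
        have h3 : D x 3 = 1 * x 3 := by rw [hx]; rfl
        rw [D_apply] at h3
        simp at h3
        show x 3 = 0
        linarith
      · intro hx
        ext k
        show D x k = 1 * x k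
        rw [D_apply]
        fin_cases k <;> simp
        rw [show x 3 = 0 from hx]
        ring
    rw [hker]
    have hrange : LinearMap.range proj3 = ⊤ := by
      rw [LinearMap.range_eq_top]
      intro c
      exact ⟨WithLp.toLp 2 (fun _ => c : Fin 8 → ℝ), rfl⟩
    have hrk := LinearMap.finrank_range_add_finrank_ker proj3
    rw [hrange, finrank_top, finrank_euclideanSpace_fin] at hrk
    simp at hrk
    omega
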